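/- Let L/k be a finite Galois extension, and let p₁,…,p₄ ∈ ℙ²(L) be four points no three of which are collinear, and q₁,…,q₄ ∈ ℙ²(L) four points no three collinear. Assume for every g ∈ Gal(L/k) there exists σ ∈ S₄ with g(pᵢ) = p_{σ(i)} and g(qᵢ) = q_{σ(i)} for all i. Then there exists a projective linear transformation A ∈ PGL₃(k) (defined over k) with A·pᵢ = qᵢ for i = 1,…,4. -/

import Mathlib

open Matrix

section Helpers

variable {L : Type*} [Field L]

lemma fixed_mem_range (k L : Type*) [Field k] [Field L] [Algebra k L]
    [FiniteDimensional k L] [IsGalois k L] (x : L)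
    (hx : ∀ g : L ≃ₐ[k] L, g x = x) : ∃ y : k, algebraMap k L y = x := by
  have h := ((IsGalois.tfae (F := k) (E := L)).out 0 1).mp (inferInstance : IsGalois k L)
  have hm : x ∈ IntermediateField.fixedField (⊤ : Subgroup (L ≃ₐ[k] L)) :=
    fun g => hx g
  rw [h] at hm
  exact IntermediateField.mem_bot.mp hm


lemma coeff_ne_zero (v0 v1 v2 v3 : Fin 3 → L) (a0 a1 a2 : L)
    (h : v3 = a0 • v0 + a1 • v1 + a2 • v2)
    (hind : LinearIndependent L ![v1, v2, v3]) : a0 ≠ 0 := by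
  intro h0
  have hrel : ∑ i : Fin 3, (![a1, a2, (-1 : L)] i) • (![v1, v2, v3] i) = 0 := by
    simp [Fin.sum_univ_three, h, h0]
    abel
  have := linearIndependent_iff'.mp hind Finset.univ ![a1, a2, (-1 : L)] hrel 2 (by simp)
  simp at this

lemma decomp (p : Fin 4 → (Fin 3 → L))
    (hp3 : ∀ i j l : Fin 4, i ≠ j → j ≠ l → i ≠ l → LinearIndependent L ![p i, p j, p l]) :
    ∃ a : Fin 3 → L, (∀ i, a i ≠ 0) ∧ p 3 = a 0 • p 0 + a 1 • p 1 + a 2 • p 2 := by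
  have hind : LinearIndependent L ![p 0, p 1, p 2] := hp3 0 1 2 (by decide) (by decide) (by decide)
  have hcard : Fintype.card (Fin 3) = Module.finrank L (Fin 3 → L) := by
    simp [Module.finrank_fin_fun]
  let b := basisOfLinearIndependentOfCardEqFinrank hind hcard
  have hb : ∀ i : Fin 3, b i = ![p 0, p 1, p 2] i := fun i => by
    rw [coe_basisOfLinearIndependentOfCardEqFinrank]
  set a : Fin 3 → L := fun i => b.repr (p 3) i with ha
  have hsum : p 3 = a 0 • p 0 + a 1 • p 1 + a 2 • p 2 := by
    have := b.sum_repr (p 3)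
    rw [Fin.sum_univ_three] at this
    rw [hb 0, hb 1, hb 2] at this
    simpa [ha] using this.symm
  refine ⟨a, fun i => ?_, hsum⟩
  fin_cases i
  · exact coeff_ne_zero (p 0) (p 1) (p 2) (p 3) (a 0) (a 1) (a 2) hsum
      (hp3 1 2 3 (by decide) (by decide) (by decide))
  · refine coeff_ne_zero (p 1) (p 0) (p 2) (p 3) (a 1) (a 0) (a 2) ?_
      (hp3 0 2 3 (by decide) (by decide) (by decide))
    rw [hsum]; abel
  · refine coeff_ne_zero (p 2) (p 0) (p 1) (p 3) (a 2) (a 0) (a 1) ?_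
      (hp3 0 1 3 (by decide) (by decide) (by decide))
    rw [hsum]; abel


lemma unique_scalar (p : Fin 4 → (Fin 3 → L))
    (hind : LinearIndependent L ![p 0, p 1, p 2])
    (a : Fin 3 → L) (hane : ∀ i, a i ≠ 0)
    (hsum : p 3 = a 0 • p 0 + a 1 • p 1 + a 2 • p 2)
    (N : Matrix (Fin 3) (Fin 3) L) (c : Fin 4 → L)
    (hN : ∀ i, N.mulVec (p i) = c i • p i) :
    N = c 3 • (1 : Matrix (Fin 3) (Fin 3) L) := by
  -- show c 0 = c 3 etc.
  have key : ∀ j : Fin 3, c (Fin.castSucc j) = c 3 := by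
    have h3 := hN 3
    rw [hsum] at h3
    rw [Matrix.mulVec_add, Matrix.mulVec_add, Matrix.mulVec_smul, Matrix.mulVec_smul,
      Matrix.mulVec_smul, hN 0, hN 1, hN 2] at h3
    have hrel : ∑ i : Fin 3,
        (![a 0 * (c 0 - c 3), a 1 * (c 1 - c 3), a 2 * (c 2 - c 3)] i) • (![p 0, p 1, p 2] i)
        = 0 := by
      rw [Fin.sum_univ_three]
      simp only [Matrix.cons_val_zero, Matrix.cons_val_one, Matrix.head_cons,
        Matrix.cons_val_two, Matrix.tail_cons]
      have hre : (a 0 * (c 0 - c 3)) • p 0 + (a 1 * (c 1 - c 3)) • p 1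
            + (a 2 * (c 2 - c 3)) • p 2
          = (a 0 • c 0 • p 0 + a 1 • c 1 • p 1 + a 2 • c 2 • p 2)
            - c 3 • (a 0 • p 0 + a 1 • p 1 + a 2 • p 2) := by
        module
      rw [hre, h3, sub_self]
    intro j
    have := linearIndependent_iff'.mp hind Finset.univ _ hrel j (Finset.mem_univ j)
    fin_cases j <;>
    · simp only [Matrix.cons_val_zero, Matrix.cons_val_one, Matrix.head_cons,
        Matrix.cons_val_two, Matrix.tail_cons] at this
      have h := mul_eq_zero.mp this
      rcases h with h | h
      · exact absurd h (hane _)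
      · simpa [sub_eq_zero] using h
  -- now N and c3 • 1 agree on the basis
  have hcard : Fintype.card (Fin 3) = Module.finrank L (Fin 3 → L) := by
    simp [Module.finrank_fin_fun]
  let b := basisOfLinearIndependentOfCardEqFinrank hind hcard
  have hb : ∀ i : Fin 3, b i = ![p 0, p 1, p 2] i := fun i => by
    rw [coe_basisOfLinearIndependentOfCardEqFinrank]
  have : Matrix.toLin' N = Matrix.toLin' (c 3 • (1 : Matrix (Fin 3) (Fin 3) L)) := by
    apply b.ext
    intro i
    rw [Matrix.toLin'_apply, Matrix.toLin'_apply, hb i]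
    have h1 : (c 3 • (1 : Matrix (Fin 3) (Fin 3) L)).mulVec (![p 0, p 1, p 2] i)
        = c 3 • (![p 0, p 1, p 2] i) := by
      rw [Matrix.smul_mulVec, Matrix.one_mulVec]
    rw [h1]
    fin_cases i
    · simpa using (hN 0).trans (by rw [show c 0 = c 3 from key 0])
    · simpa using (hN 1).trans (by rw [show c 1 = c 3 from key 1])
    · simpa using (hN 2).trans (by rw [show c 2 = c 3 from key 2])
  exact Matrix.toLin'.injective this


lemma core_exists (p q : Fin 4 → (Fin 3 → L))
    (hindp : LinearIndependent L ![p 0, p 1, p 2])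
    (hindq : LinearIndependent L ![q 0, q 1, q 2])
    (a b : Fin 3 → L) (hane : ∀ i, a i ≠ 0) (hbne : ∀ i, b i ≠ 0)
    (hpsum : p 3 = a 0 • p 0 + a 1 • p 1 + a 2 • p 2)
    (hqsum : q 3 = b 0 • q 0 + b 1 • q 1 + b 2 • q 2) :
    ∃ A M : Matrix (Fin 3) (Fin 3) L, M * A = 1 ∧
      ∀ i, ∃ c : L, c ≠ 0 ∧ A.mulVec (p i) = c • q i := by
  have hcard : Fintype.card (Fin 3) = Module.finrank L (Fin 3 → L) := by
    simp [Module.finrank_fin_fun]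
  let bP := basisOfLinearIndependentOfCardEqFinrank hindp hcard
  let bQ := basisOfLinearIndependentOfCardEqFinrank hindq hcard
  have hbP : ∀ i : Fin 3, bP i = ![p 0, p 1, p 2] i := fun i => by
    rw [coe_basisOfLinearIndependentOfCardEqFinrank]
  have hbQ : ∀ i : Fin 3, bQ i = ![q 0, q 1, q 2] i := fun i => by
    rw [coe_basisOfLinearIndependentOfCardEqFinrank]
  -- target vectors
  let u : Fin 3 → (Fin 3 → L) := fun i => ((a i)⁻¹ * b i) • (![q 0, q 1, q 2] i)
  let w : Fin 3 → (Fin 3 → L) := fun i => ((b i)⁻¹ * a i) • (![p 0, p 1, p 2] i)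
  let f : (Fin 3 → L) →ₗ[L] (Fin 3 → L) := bP.constr L u
  let g : (Fin 3 → L) →ₗ[L] (Fin 3 → L) := bQ.constr L w
  have hfP : ∀ i : Fin 3, f (![p 0, p 1, p 2] i) = u i := fun i => by
    rw [← hbP i]; exact bP.constr_basis L u i
  have hgQ : ∀ i : Fin 3, g (![q 0, q 1, q 2] i) = w i := fun i => by
    rw [← hbQ i]; exact bQ.constr_basis L w i
  have hgf : g.comp f = LinearMap.id := by
    apply bP.ext
    intro i
    simp only [LinearMap.comp_apply, LinearMap.id_apply]
    rw [hbP i, hfP i]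
    show g (((a i)⁻¹ * b i) • (![q 0, q 1, q 2] i)) = _
    rw [_root_.map_smul, hgQ i]
    show ((a i)⁻¹ * b i) • ((b i)⁻¹ * a i) • (![p 0, p 1, p 2] i) = _
    rw [smul_smul]
    have : (a i)⁻¹ * b i * ((b i)⁻¹ * a i) = 1 := by
      field_simp
      rw [mul_comm (a i) (b i)]
      exact div_self (mul_ne_zero (hbne i) (hane i))
    rw [this, one_smul]
  refine ⟨LinearMap.toMatrix' f, LinearMap.toMatrix' g, ?_, ?_⟩
  · rw [← LinearMap.toMatrix'_comp, hgf, LinearMap.toMatrix'_id]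
  · have hmul : ∀ v, (LinearMap.toMatrix' f).mulVec v = f v := fun v => by
      rw [← Matrix.toLin'_apply, Matrix.toLin'_toMatrix']
    intro i
    fin_cases i
    · exact ⟨(a 0)⁻¹ * b 0, by
        simp [hane 0, hbne 0], by rw [hmul]; simpa [u] using hfP 0⟩
    · exact ⟨(a 1)⁻¹ * b 1, by
        simp [hane 1, hbne 1], by rw [hmul]; simpa [u] using hfP 1⟩
    · exact ⟨(a 2)⁻¹ * b 2, by
        simp [hane 2, hbne 2], by rw [hmul]; simpa [u] using hfP 2⟩
    · refine ⟨1, one_ne_zero, ?_⟩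
      rw [hmul]
      show f (p 3) = (1 : L) • q 3
      rw [hpsum, one_smul, hqsum]
      rw [map_add, map_add, _root_.map_smul, _root_.map_smul, _root_.map_smul]
      have h0 := hfP 0; have h1 := hfP 1; have h2 := hfP 2
      simp only [Matrix.cons_val_zero, Matrix.cons_val_one, Matrix.head_cons,
        Matrix.cons_val_two, Matrix.tail_cons] at h0 h1 h2
      rw [h0, h1, h2]
      show a 0 • (((a 0)⁻¹ * b 0) • q 0) + a 1 • (((a 1)⁻¹ * b 1) • q 1)
          + a 2 • (((a 2)⁻¹ * b 2) • q 2) = _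
      rw [smul_smul, smul_smul, smul_smul]
      congr 2
      · congr 1
        field_simp
        exact mul_div_cancel_left₀ _ (hane 0)
      · congr 1
        field_simp
        exact mul_div_cancel_left₀ _ (hane 1)
      · field_simp
        exact mul_div_cancel_left₀ _ (hane 2)

end Helpers

/-- Points of `ℙ²(L)` are represented by nonzero vectors in `Fin 3 → L` up to scaling;
"no three collinear" means any three of the vectors are linearly independent.
If the Galois group of a finite Galois extension `L/k` permutes the projective points
`p₁,…,p₄` and `q₁,…,q₄` by the same permutation, then there is a matrix `A ∈ GL₃(k)`
(defining an element of `PGL₃(k)`) with `A·pᵢ = qᵢ` projectively for all `i`. -/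
theorem stmt_12 (k L : Type*) [Field k] [Field L] [Algebra k L]
    [FiniteDimensional k L] [IsGalois k L]
    (p q : Fin 4 → (Fin 3 → L))
    (hp3 : ∀ i j l : Fin 4, i ≠ j → j ≠ l → i ≠ l → LinearIndependent L ![p i, p j, p l])
    (hq3 : ∀ i j l : Fin 4, i ≠ j → j ≠ l → i ≠ l → LinearIndependent L ![q i, q j, q l])
    (hgal : ∀ g : L ≃ₐ[k] L, ∃ σ : Equiv.Perm (Fin 4),
      (∀ i, ∃ c : Lˣ, (fun m => g (p i m)) = (c : L) • p (σ i)) ∧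
      (∀ i, ∃ c : Lˣ, (fun m => g (q i m)) = (c : L) • q (σ i))) :
    ∃ A : Matrix (Fin 3) (Fin 3) k, IsUnit A.det ∧
      ∀ i, ∃ c : Lˣ, (A.map (algebraMap k L)).mulVec (p i) = (c : L) • q i := by
  classical
  obtain ⟨a, hane, hpsum⟩ := decomp p hp3
  obtain ⟨b, hbne, hqsum⟩ := decomp q hq3
  have hindp : LinearIndependent L ![p 0, p 1, p 2] :=
    hp3 0 1 2 (by decide) (by decide) (by decide)
  have hindq : LinearIndependent L ![q 0, q 1, q 2] :=
    hq3 0 1 2 (by decide) (by decide) (by decide)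
  obtain ⟨A, M, hMA, hAc⟩ := core_exists p q hindp hindq a b hane hbne hpsum hqsum
  choose cA hcAne hcA using hAc
  have hAM : A * M = 1 := mul_eq_one_comm.mp hMA
  have hmapvec : ∀ (g : L ≃ₐ[k] L) (M' : Matrix (Fin 3) (Fin 3) L) (v : Fin 3 → L),
      (M'.map g).mulVec (fun m => g (v m)) = fun m => g (M'.mulVec v m) := by
    intro g M' v; funext m
    simp [Matrix.mulVec, dotProduct, map_sum, _root_.map_mul]
  -- For each Galois element, A.map g is a scalar multiple of A
  have hscal : ∀ g : L ≃ₐ[k] L, ∃ e : L, e ≠ 0 ∧ A.map g = e • A := by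
    intro g
    obtain ⟨σ, hgp, hgq⟩ := hgal g
    have hAg : ∀ j, ∃ d : L, d ≠ 0 ∧ (A.map g).mulVec (p j) = d • q j := by
      intro j
      obtain ⟨e, he⟩ := hgp (σ⁻¹ j)
      obtain ⟨e', he'⟩ := hgq (σ⁻¹ j)
      rw [show σ (σ⁻¹ j) = j from σ.apply_symm_apply j] at he he'
      set i := σ⁻¹ j with hi
      have hpj : p j = (e : L)⁻¹ • (fun m => g (p i m)) := by
        rw [he, smul_smul, inv_mul_cancel₀ e.ne_zero, one_smul]
      refine ⟨(e : L)⁻¹ * g (cA i) * (e' : L), ?_, ?_⟩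
      · exact mul_ne_zero (mul_ne_zero (inv_ne_zero e.ne_zero)
          ((map_ne_zero g).mpr (hcAne i))) e'.ne_zero
      · rw [hpj, Matrix.mulVec_smul, hmapvec g A (p i)]
        have h1 : (fun m => g ((A.mulVec (p i)) m)) = g (cA i) • (fun m => g (q i m)) := by
          funext m
          rw [hcA i]
          simp [_root_.map_mul]
        rw [h1, he']
        rw [smul_smul, smul_smul]
    choose d hdne hd using hAg
    have hMq : ∀ j, M.mulVec (q j) = (cA j)⁻¹ • p j := by
      intro j
      have h0 : M.mulVec (A.mulVec (p j)) = p j := by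
        rw [Matrix.mulVec_mulVec, hMA, Matrix.one_mulVec]
      rw [hcA j, Matrix.mulVec_smul] at h0
      rw [← h0, smul_smul, inv_mul_cancel₀ (hcAne j), one_smul]
    have hN : ∀ j, (M * (A.map g)).mulVec (p j) = (d j * (cA j)⁻¹) • p j := by
      intro j
      rw [← Matrix.mulVec_mulVec, hd j, Matrix.mulVec_smul, hMq j, smul_smul]
    have huniq := unique_scalar p hindp a hane hpsum (M * (A.map g))
      (fun j => d j * (cA j)⁻¹) hN
    refine ⟨d 3 * (cA 3)⁻¹, mul_ne_zero (hdne 3) (inv_ne_zero (hcAne 3)), ?_⟩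
    calc A.map g = (A * M) * (A.map g) := by rw [hAM, Matrix.one_mul]
      _ = A * (M * (A.map g)) := by rw [Matrix.mul_assoc]
      _ = A * ((d 3 * (cA 3)⁻¹) • 1) := by rw [huniq]
      _ = (d 3 * (cA 3)⁻¹) • A := by
          rw [Matrix.mul_smul, Matrix.mul_one]
  -- pick a nonzero entry of A
  have hAne : ∃ r s, A r s ≠ 0 := by
    by_contra hc
    push_neg at hc
    have hA0 : A = 0 := by ext r s; exact hc r s
    rw [hA0, Matrix.mul_zero] at hMA
    exact one_ne_zero (congrFun (congrFun hMA.symm 0) 0)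
  obtain ⟨r, s, hrs⟩ := hAne
  set B : Matrix (Fin 3) (Fin 3) L := (A r s)⁻¹ • A with hB
  -- every entry of B is Galois fixed
  have hfix : ∀ m n, ∃ y : k, algebraMap k L y = B m n := by
    intro m n
    apply fixed_mem_range k L
    intro g
    obtain ⟨e, hene, heA⟩ := hscal g
    have h1 : g (A m n) = e * A m n := by
      have := congrFun (congrFun heA m) n
      simp only [Matrix.map_apply, Matrix.smul_apply, smul_eq_mul] at this
      exact this
    have h2 : g (A r s) = e * A r s := by
      have := congrFun (congrFun heA r) s
      simp only [Matrix.map_apply, Matrix.smul_apply, smul_eq_mul] at this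
      exact this
    have hBmn : B m n = (A r s)⁻¹ * A m n := by
      rw [hB]; simp [smul_eq_mul]
    rw [hBmn, _root_.map_mul, map_inv₀, h1, h2, mul_inv]
    field_simp
  choose A' hA' using fun m n => hfix m n
  have hmap : (Matrix.of A').map (algebraMap k L) = B := by
    ext m n
    exact hA' m n
  refine ⟨Matrix.of A', ?_, ?_⟩
  · -- determinant is a unit
    have hdetA : A.det ≠ 0 := by
      intro h0
      have : (M * A).det = 0 := by rw [Matrix.det_mul, h0, mul_zero]
      rw [hMA, Matrix.det_one] at this
      exact one_ne_zero this
    have hdetB : B.det ≠ 0 := by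
      rw [hB, Matrix.det_smul]
      exact mul_ne_zero (pow_ne_zero _ (inv_ne_zero hrs)) hdetA
    have : algebraMap k L (Matrix.of A').det = B.det := by
      rw [RingHom.map_det, RingHom.mapMatrix_apply, hmap]
    have hne : (Matrix.of A').det ≠ 0 := by
      intro h0
      rw [h0, map_zero] at this
      exact hdetB this.symm
    exact isUnit_iff_ne_zero.mpr hne
  · intro i
    refine ⟨Units.mk0 ((A r s)⁻¹ * cA i)
      (mul_ne_zero (inv_ne_zero hrs) (hcAne i)), ?_⟩
    rw [hmap, hB, Matrix.smul_mulVec, hcA i, smul_smul]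
    rfl
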